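/- Suppose Assumption Z0 holds: ∫_ℝ ‖C e^{-itH₀} u‖² dt ≤ c₀² ‖u‖² for all u ∈ ℋ. Then the wave operator W₋(H₀,H) := s-lim_{t→+∞} e^{itH₀} e^{-itH} exists on ℋ. -/

import Mathlib

set_option maxHeartbeats 1000000


open MeasureTheory Filter Topology ContinuousLinearMap

/-- under Assumption Z0 (`∫_ℝ ‖C e^{-itH₀} u‖² dt ≤ c₀² ‖u‖²`), the
wave operator `W₋(H₀,H) = s-lim_{t→+∞} e^{itH₀} e^{-itH}` exists on ℋ.
Here `U0 t = e^{-itH₀}` (unitary group), `U t = e^{-itH}` a contraction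
semigroup for `t ≥ 0` with `∫₀^∞ ‖C e^{-isH}u‖² ds ≤ ‖u‖²`, and Duhamel's
formula holds. -/
theorem stmt6
    {ℋ : Type*} [NormedAddCommGroup ℋ] [InnerProductSpace ℂ ℋ] [CompleteSpace ℋ]
    [TopologicalSpace.SeparableSpace ℋ]
    (C : ℋ →L[ℂ] ℋ)
    (U0 U : ℝ → ℋ →L[ℂ] ℋ)
    (hU00 : U0 0 = 1) (hgroup0 : ∀ s t : ℝ, U0 (s + t) = (U0 s).comp (U0 t))
    (hunitary : ∀ t : ℝ, ∀ u : ℋ, ‖U0 t u‖ = ‖u‖)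
    (hU0' : U 0 = 1)
    (hsemi : ∀ s t : ℝ, 0 ≤ s → 0 ≤ t → U (s + t) = (U s).comp (U t))
    (hcontr : ∀ t : ℝ, 0 ≤ t → ∀ u : ℋ, ‖U t u‖ ≤ ‖u‖)
    (c₀ : ℝ)
    (hZ0 : ∀ u : ℋ, Integrable (fun t : ℝ => ‖C (U0 t u)‖ ^ 2) ∧
      ∫ t : ℝ, ‖C (U0 t u)‖ ^ 2 ≤ c₀ ^ 2 * ‖u‖ ^ 2)
    (hsm : ∀ u : ℋ, IntegrableOn (fun s => ‖C (U s u)‖ ^ 2) (Set.Ioi (0:ℝ)) ∧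
      ∫ s in Set.Ioi (0:ℝ), ‖C (U s u)‖ ^ 2 ≤ ‖u‖ ^ 2)
    (hduhamel : ∀ u : ℋ, ∀ t : ℝ, 0 ≤ t →
      U0 (-t) (U t u) =
        u - (1/2 : ℂ) • ∫ s in (0:ℝ)..t, U0 (-s) ((adjoint C) (C (U s u)))) :
    ∀ u : ℋ, ∃ w : ℋ, Tendsto (fun t => U0 (-t) (U t u)) atTop (𝓝 w) := by
  intro u
  -- the tail function
  set φ : ℝ → ℝ := fun s => ‖C (U s u)‖ ^ 2 with hφ
  have hφint : IntegrableOn φ (Set.Ioi 0) := (hsm u).1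
  have hφnn : ∀ s, 0 ≤ φ s := fun s => sq_nonneg _
  set δ : ℝ → ℝ := fun t => ∫ s in Set.Ioi t, φ s with hδdef
  have hδnn : ∀ t, 0 ≤ δ t := fun t =>
    setIntegral_nonneg measurableSet_Ioi (fun s _ => hφnn s)
  -- the tail tends to zero
  have hδ0 : Tendsto δ atTop (𝓝 0) := by
    have heq : ∀ t : ℝ, 0 ≤ t →
        δ t = (∫ s in Set.Ioi (0:ℝ), φ s) - ∫ s in (0:ℝ)..t, φ s := by
      intro t ht
      have hsplit : (∫ s in Set.Ioi (0:ℝ), φ s)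
          = (∫ s in Set.Ioc 0 t, φ s) + ∫ s in Set.Ioi t, φ s := by
        rw [← setIntegral_union (Set.Ioc_disjoint_Ioi le_rfl) measurableSet_Ioi
          (hφint.mono_set Set.Ioc_subset_Ioi_self)
          (hφint.mono_set (Set.Ioi_subset_Ioi ht)), Set.Ioc_union_Ioi_eq_Ioi ht]
      rw [hδdef, intervalIntegral.integral_of_le ht]
      simp only [hsplit]; ring
    have h1 : Tendsto (fun t : ℝ => (∫ s in Set.Ioi (0:ℝ), φ s) - ∫ s in (0:ℝ)..t, φ s)
        atTop (𝓝 0) := by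
      have := intervalIntegral_tendsto_integral_Ioi (0:ℝ) hφint tendsto_id
      simpa using (tendsto_const_nhds (x := ∫ s in Set.Ioi (0:ℝ), φ s)).sub this
    exact h1.congr' (by filter_upwards [eventually_ge_atTop (0:ℝ)] with t ht using (heq t ht).symm)
  -- inner ℂ product preservation by U0
  have hinner0 : ∀ s : ℝ, ∀ x y : ℋ, (inner ℂ (U0 s x) (U0 s y) : ℂ) = inner ℂ x y := by
    intro s x y
    exact LinearIsometry.inner_map_map ⟨(U0 s).toLinearMap, hunitary s⟩ x y
  have hU0inv : ∀ s : ℝ, ∀ x : ℋ, U0 s (U0 (-s) x) = x := by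
    intro s x
    have h := hgroup0 s (-s)
    rw [add_neg_cancel, hU00] at h
    have := congrArg (fun T : ℋ →L[ℂ] ℋ => T x) h
    simpa using this.symm
  have hinner : ∀ s : ℝ, ∀ v x : ℋ, (inner ℂ v (U0 (-s) x) : ℂ) = inner ℂ (U0 s v) x := by
    intro s v x
    conv_rhs => rw [← hU0inv s x]
    rw [hinner0]
  -- key quantitative bound
  have key : ∀ t t' : ℝ, 0 ≤ t → t ≤ t' →
      ‖U0 (-t') (U t' u) - U0 (-t) (U t u)‖ ^ 2 ≤ (c₀ ^ 2 + 1) / 4 * δ t := by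
    intro t t' ht htt'
    set τ := t' - t with hτ
    have hτ0 : 0 ≤ τ := sub_nonneg.2 htt'
    set u_t := U t u with hut
    set f : ℝ → ℋ := fun s => U0 (-s) ((adjoint C) (C (U s u_t))) with hfdef
    set I := ∫ s in (0:ℝ)..τ, f s with hIdef
    -- difference identity
    have hdiff : U0 (-t') (U t' u) - U0 (-t) (U t u) = -((1/2 : ℂ) • U0 (-t) I) := by
      have h1 : τ + t = t' := by ring
      have h2 : U t' u = U τ u_t := by
        rw [← h1, hsemi τ t hτ0 ht]; rfl
      have h3 : U0 (-t') = (U0 (-t)).comp (U0 (-τ)) := by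
        rw [← hgroup0 (-t) (-τ)]; congr 1; ring
      have h4 := hduhamel u_t τ hτ0
      rw [h2, h3]
      simp only [ContinuousLinearMap.comp_apply]
      rw [h4, map_sub, _root_.map_smul, ← hut, ← hIdef]
      abel
    have hnormdiff : ‖U0 (-t') (U t' u) - U0 (-t) (U t u)‖ ^ 2 = (1/4) * ‖I‖ ^ 2 := by
      rw [hdiff, norm_neg, norm_smul, hunitary, mul_pow]
      norm_num
    -- bound on ‖I‖²
    have hIbound : ‖I‖ ^ 2 ≤ (c₀ ^ 2 + 1) * δ t := by
      by_cases hint : IntervalIntegrable f volume 0 τ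
      · -- nontrivial case
        set ε : ℝ := 1 / (c₀ ^ 2 + 1) with hεdef
        have hc1 : (0:ℝ) < c₀ ^ 2 + 1 := by positivity
        have hε : 0 < ε := by positivity
        set g : ℝ → ℝ := fun s => ‖C (U0 s I)‖ with hgdef
        set ψ : ℝ → ℝ := fun s => ‖C (U (s + t) u)‖ ^ 2 with hψdef
        -- pointwise identity for the inner ℂ product
        have hpt : ∀ s : ℝ, (inner ℂ I (f s) : ℂ) = inner ℂ (C (U0 s I)) (C (U s u_t)) := by
          intro s
          rw [hfdef]
          simp only []
          rw [hinner s I ((adjoint C) (C (U s u_t))), adjoint_inner_right]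
        -- integrability facts
        have hginti : Integrable (fun s : ℝ => g s ^ 2) := (hZ0 I).1
        have hψIoc : IntegrableOn φ (Set.Ioc t t') := by
          refine hφint.mono_set ?_
          intro s hs
          exact lt_of_le_of_lt ht hs.1
        have hφII : IntervalIntegrable φ volume t t' := by
          rw [intervalIntegrable_iff_integrableOn_Ioc_of_le htt']
          exact hψIoc
        have hψII : IntervalIntegrable ψ volume 0 τ := by
          have h := hφII.comp_add_right t
          rw [← hτ] at h
          simpa [hψdef, hφ, sub_self] using h
        have hinnerII : IntervalIntegrable (fun s => ‖(inner ℂ I (f s) : ℂ)‖) volume 0 τ := by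
          have h1 : IntervalIntegrable (fun s => (innerSL ℂ I) (f s)) volume 0 τ :=
            ⟨(innerSL ℂ I).integrable_comp hint.1, (innerSL ℂ I).integrable_comp hint.2⟩
          simpa [innerSL_apply_apply] using h1.norm
        have hRHSII : IntervalIntegrable
            (fun s => ε / 2 * g s ^ 2 + 1 / (2 * ε) * ψ s) volume 0 τ :=
          ((hginti.intervalIntegrable).const_mul _).add (hψII.const_mul _)
        -- main estimate
        have step1 : ‖I‖ ^ 2 ≤ ‖(inner ℂ I I : ℂ)‖ := by
          have h1 := inner_self_eq_norm_sq (𝕜 := ℂ) I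
          calc ‖I‖ ^ 2 = RCLike.re (inner ℂ I I : ℂ) := h1.symm
            _ ≤ ‖(inner ℂ I I : ℂ)‖ := le_trans (le_abs_self _) (RCLike.abs_re_le_norm _)
        have step2 : (inner ℂ I I : ℂ) = ∫ s in (0:ℝ)..τ, (inner ℂ I (f s) : ℂ) := by
          have := (innerSL ℂ I).intervalIntegral_comp_comm hint (a := 0) (b := τ)
          simpa [innerSL_apply_apply, hIdef] using this.symm
        have step3 : ‖(inner ℂ I I : ℂ)‖ ≤ ∫ s in (0:ℝ)..τ, ‖(inner ℂ I (f s) : ℂ)‖ := by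
          rw [step2]
          exact intervalIntegral.norm_integral_le_integral_norm hτ0
        have step4 : (∫ s in (0:ℝ)..τ, ‖(inner ℂ I (f s) : ℂ)‖)
            ≤ ∫ s in (0:ℝ)..τ, (ε / 2 * g s ^ 2 + 1 / (2 * ε) * ψ s) := by
          refine intervalIntegral.integral_mono_on hτ0 hinnerII hRHSII ?_
          intro s hs
          have hseq : U s u_t = U (s + t) u := by
            rw [hut, hsemi s t hs.1 ht]; rfl
          have h1 : ‖(inner ℂ I (f s) : ℂ)‖ ≤ g s * ‖C (U (s + t) u)‖ := by
            rw [hpt s, hseq]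
            exact norm_inner_le_norm _ _
          have h2 : g s * ‖C (U (s + t) u)‖
              ≤ ε / 2 * g s ^ 2 + 1 / (2 * ε) * ψ s := by
            have hamgm : ε / 2 * g s ^ 2 + 1 / (2 * ε) * ψ s - g s * ‖C (U (s + t) u)‖
                = (ε * g s - ‖C (U (s + t) u)‖) ^ 2 / (2 * ε) := by
              rw [hψdef]
              field_simp
              ring
            nlinarith [div_nonneg (sq_nonneg (ε * g s - ‖C (U (s + t) u)‖))
              (le_of_lt (by positivity : (0:ℝ) < 2 * ε))]
          linarith
        have step5 : (∫ s in (0:ℝ)..τ, (ε / 2 * g s ^ 2 + 1 / (2 * ε) * ψ s))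
            = ε / 2 * (∫ s in (0:ℝ)..τ, g s ^ 2) + 1 / (2 * ε) * ∫ s in (0:ℝ)..τ, ψ s := by
          rw [intervalIntegral.integral_add ((hginti.intervalIntegrable).const_mul _)
            (hψII.const_mul _), intervalIntegral.integral_const_mul,
            intervalIntegral.integral_const_mul]
        have step6 : (∫ s in (0:ℝ)..τ, g s ^ 2) ≤ c₀ ^ 2 * ‖I‖ ^ 2 := by
          have h1 : (∫ s in (0:ℝ)..τ, g s ^ 2) = ∫ s in Set.Ioc (0:ℝ) τ, g s ^ 2 :=
            intervalIntegral.integral_of_le hτ0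
          rw [h1]
          refine le_trans (setIntegral_le_integral hginti
            (ae_of_all _ fun s => sq_nonneg _)) (hZ0 I).2
        have step7 : (∫ s in (0:ℝ)..τ, ψ s) ≤ δ t := by
          have h1 : (∫ s in (0:ℝ)..τ, ψ s) = ∫ s in t..t', φ s := by
            have h2 := intervalIntegral.integral_comp_add_right (a := (0:ℝ)) (b := τ) φ t
            rw [hτ, sub_add_cancel, zero_add] at h2
            rw [← hτ] at h2
            simpa [hψdef, hφ] using h2
          rw [h1, intervalIntegral.integral_of_le htt']
          refine setIntegral_mono_set (hφint.mono_set (Set.Ioi_subset_Ioi ht))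
            (ae_of_all _ fun s => hφnn s) (HasSubset.Subset.eventuallyLE Set.Ioc_subset_Ioi_self)
        -- combine
        have hεc : ε * c₀ ^ 2 ≤ 1 := by
          rw [hεdef, div_mul_eq_mul_div, div_le_one hc1]
          linarith [sq_nonneg c₀]
        have h2ε : 1 / (2 * ε) = (c₀ ^ 2 + 1) / 2 := by
          rw [hεdef]; field_simp
        have hnI : 0 ≤ ‖I‖ ^ 2 := sq_nonneg _
        have chain : ‖I‖ ^ 2 ≤ ε / 2 * (c₀ ^ 2 * ‖I‖ ^ 2) + (c₀ ^ 2 + 1) / 2 * δ t := by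
          calc ‖I‖ ^ 2 ≤ ‖(inner ℂ I I : ℂ)‖ := step1
            _ ≤ ∫ s in (0:ℝ)..τ, ‖(inner ℂ I (f s) : ℂ)‖ := step3
            _ ≤ _ := step4
            _ = _ := step5
            _ ≤ ε / 2 * (c₀ ^ 2 * ‖I‖ ^ 2) + (c₀ ^ 2 + 1) / 2 * δ t := by
                rw [h2ε]
                gcongr
        nlinarith [mul_le_mul_of_nonneg_right hεc hnI]
      · rw [hIdef, intervalIntegral.integral_undef hint]
        simpa using mul_nonneg (le_of_lt (by positivity : (0:ℝ) < c₀ ^ 2 + 1)) (hδnn t)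
    rw [hnormdiff]
    linarith
  -- Cauchy criterion
  have hcauchy : CauchySeq (fun t : ℝ => U0 (-t) (U t u)) := by
    rw [Metric.cauchySeq_iff']
    intro ε hε
    have h1 : ∀ᶠ t in atTop, δ t < ε ^ 2 * (4 / (c₀ ^ 2 + 1)) :=
      hδ0.eventually (gt_mem_nhds (by positivity))
    obtain ⟨N, hN1, hN0⟩ := (h1.and (eventually_ge_atTop (0:ℝ))).exists
    refine ⟨N, fun n hn => ?_⟩
    have hb := key N n hN0 hn
    have hc1 : (0:ℝ) < c₀ ^ 2 + 1 := by positivity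
    have h2 : ‖U0 (-n) (U n u) - U0 (-N) (U N u)‖ ^ 2 < ε ^ 2 := by
      calc ‖U0 (-n) (U n u) - U0 (-N) (U N u)‖ ^ 2 ≤ (c₀ ^ 2 + 1) / 4 * δ N := hb
        _ < (c₀ ^ 2 + 1) / 4 * (ε ^ 2 * (4 / (c₀ ^ 2 + 1))) := by
            apply mul_lt_mul_of_pos_left hN1 (by positivity)
        _ = ε ^ 2 := by field_simp
    have := lt_of_pow_lt_pow_left₀ 2 (le_of_lt hε) h2
    simpa [dist_eq_norm] using this
  exact cauchySeq_tendsto_of_complete hcauchy
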